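/- arXiv:1302.3144 — 3 statements merged into one kernel-verified Lean document; each statement's English description precedes it below -/
import Mathlib

section
/- Fix $u \ge 0$, $\lambda > 0$, $\nu > 0$, and $\rho \in (0,1)$ with $\rho = \lambda/\mu$ for some $\mu > 0$. Define $h(\rho) = e^{-(1-\rho) u}$ and $G(r) = \left(\frac{1-\rho}{1-\rho r}\right)^{1+\lambda/\nu} e^{(r-1)\lambda/\nu}$. Then, holding $\mu$ and $\nu$ fixed and letting $\lambda \uparrow \mu$ (so $\rho \uparrow 1$), $\lim_{\rho \uparrow 1} G(h(\rho)) = (1+u)^{-(1+\mu/\nu)}$. -/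
open Filter Real

theorem stmt_10 (u μ ν : ℝ) (hu : 0 ≤ u) (hμ : 0 < μ) (hν : 0 < ν) :
    Tendsto (fun l : ℝ =>
        ((1 - l / μ) / (1 - (l / μ) * Real.exp (-(1 - l / μ) * u))) ^ (1 + l / ν) *
          Real.exp ((Real.exp (-(1 - l / μ) * u) - 1) * l / ν))
      (nhdsWithin μ (Set.Iio μ)) (nhds ((1 + u) ^ (-(1 + μ / ν)))) := by
  have h1u : (0:ℝ) < 1 + u := by linarith
  -- ε := 1 - l/μ tends to 0 within Ioi 0
  have hε : Tendsto (fun l : ℝ => 1 - l / μ) (nhdsWithin μ (Set.Iio μ))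
      (nhdsWithin 0 (Set.Ioi 0)) := by
    rw [tendsto_nhdsWithin_iff]
    constructor
    · have h : Tendsto (fun l : ℝ => 1 - l / μ) (nhds μ) (nhds (1 - μ / μ)) :=
        tendsto_const_nhds.sub (tendsto_id.div_const μ)
      rw [div_self hμ.ne', sub_self] at h
      exact h.mono_left nhdsWithin_le_nhds
    · filter_upwards [self_mem_nhdsWithin] with l hl
      have h1 : l / μ < 1 := (div_lt_one hμ).2 hl
      simp only [Set.mem_Ioi]
      linarith
  -- slope limit : (1 - exp(-x u))/x → u as x → 0⁺
  have hslope : Tendsto (fun x : ℝ => (1 - Real.exp (-x * u)) / x)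
      (nhdsWithin 0 (Set.Ioi 0)) (nhds u) := by
    have hd : HasDerivAt (fun x : ℝ => 1 - Real.exp (-x * u)) u 0 := by
      have h1 : HasDerivAt (fun x : ℝ => -x * u) (-u) 0 := by
        simpa using ((hasDerivAt_id (0:ℝ)).neg.mul_const u)
      have h2 : HasDerivAt (fun x : ℝ => Real.exp (-x * u)) (Real.exp (-(0:ℝ) * u) * (-u)) 0 :=
        (Real.hasDerivAt_exp _).comp 0 h1
      have h3 : HasDerivAt (fun x : ℝ => (1:ℝ) - Real.exp (-x * u)) (0 - Real.exp (-(0:ℝ) * u) * (-u)) 0 :=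
        (hasDerivAt_const (0:ℝ) (1:ℝ)).sub h2
      simpa using h3
    have h4 := hasDerivAt_iff_tendsto_slope.1 hd
    have h5 : Tendsto (slope (fun x : ℝ => 1 - Real.exp (-x * u)) 0)
        (nhdsWithin 0 (Set.Ioi 0)) (nhds u) :=
      h4.mono_left (nhdsWithin_mono 0 (fun x hx => ne_of_gt hx))
    refine h5.congr (fun x => ?_)
    simp [slope_def_field, div_eq_div_iff]
  -- T := D/ε tends to 1 + u
  have hT : Tendsto (fun l : ℝ =>
      (1 - (l / μ) * Real.exp (-(1 - l / μ) * u)) / (1 - l / μ))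
      (nhdsWithin μ (Set.Iio μ)) (nhds (1 + u)) := by
    have hinner : Tendsto (fun x : ℝ => (1 - Real.exp (-x * u)) / x + Real.exp (-x * u))
        (nhdsWithin 0 (Set.Ioi 0)) (nhds (u + 1)) := by
      have hexp : Tendsto (fun x : ℝ => Real.exp (-x * u)) (nhdsWithin 0 (Set.Ioi 0))
          (nhds 1) := by
        have : Continuous (fun x : ℝ => Real.exp (-x * u)) := by continuity
        have h := (this.tendsto 0).mono_left (nhdsWithin_le_nhds (s := Set.Ioi 0))
        simpa using h
      exact hslope.add hexp
    have hcomp := hinner.comp hε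
    have heq : ∀ᶠ l in nhdsWithin μ (Set.Iio μ),
        ((fun x : ℝ => (1 - Real.exp (-x * u)) / x + Real.exp (-x * u)) ∘
          (fun l : ℝ => 1 - l / μ)) l =
        (1 - (l / μ) * Real.exp (-(1 - l / μ) * u)) / (1 - l / μ) := by
      filter_upwards [self_mem_nhdsWithin] with l hl
      have h1 : l / μ < 1 := (div_lt_one hμ).2 hl
      have h2 : (1:ℝ) - l / μ ≠ 0 := by linarith
      simp only [Function.comp]
      have key : ∀ e ε : ℝ, ε ≠ 0 → (1 - e) / ε + e = (1 - (1 - ε) * e) / ε := by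
        intro e ε h
        field_simp
        ring
      have h4 : (1:ℝ) - (l / μ) * Real.exp (-(1 - l / μ) * u) =
          1 - (1 - (1 - l / μ)) * Real.exp (-(1 - l / μ) * u) := by ring
      rw [h4]
      exact key _ _ h2
    have := hcomp.congr' heq
    simpa [add_comm] using this
  -- base tends to (1+u)⁻¹
  have hbase : Tendsto (fun l : ℝ =>
      (1 - l / μ) / (1 - (l / μ) * Real.exp (-(1 - l / μ) * u)))
      (nhdsWithin μ (Set.Iio μ)) (nhds (1 + u)⁻¹) := by
    have h := hT.inv₀ (by positivity)
    refine h.congr (fun l => ?_)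
    rw [inv_div]
  -- exponent tends to 1 + μ/ν
  have hexpnt : Tendsto (fun l : ℝ => 1 + l / ν) (nhdsWithin μ (Set.Iio μ))
      (nhds (1 + μ / ν)) :=
    (tendsto_const_nhds.add (tendsto_id.div_const ν)).mono_left nhdsWithin_le_nhds
  -- rpow part
  have hrpow : Tendsto (fun l : ℝ =>
      ((1 - l / μ) / (1 - (l / μ) * Real.exp (-(1 - l / μ) * u))) ^ (1 + l / ν))
      (nhdsWithin μ (Set.Iio μ)) (nhds ((1 + u)⁻¹ ^ (1 + μ / ν))) :=
    hbase.rpow hexpnt (Or.inl (by positivity))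
  -- exp factor tends to 1
  have hexpf : Tendsto (fun l : ℝ =>
      Real.exp ((Real.exp (-(1 - l / μ) * u) - 1) * l / ν))
      (nhdsWithin μ (Set.Iio μ)) (nhds 1) := by
    have hc : Continuous (fun l : ℝ => Real.exp ((Real.exp (-(1 - l / μ) * u) - 1) * l / ν)) := by
      continuity
    have h := (hc.tendsto μ).mono_left (nhdsWithin_le_nhds (s := Set.Iio μ))
    simpa [div_self hμ.ne'] using h
  have hmul := hrpow.mul hexpf
  have hval : (1 + u)⁻¹ ^ (1 + μ / ν) * 1 = (1 + u) ^ (-(1 + μ / ν)) := by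
    rw [mul_one, Real.rpow_neg h1u.le, ← Real.inv_rpow h1u.le]
  rwa [hval] at hmul
end

section
/- Let $\mu > 0$, $0 < \lambda < \mu$, $\rho = \lambda/\mu$, and $\nu > 0$. With $\tilde{B}(s) = \mu/(\mu+s)$, the following identity holds for all $r \in [0,1)$: $\frac{(1-\rho)\tilde{B}(\lambda(1-r))(1-r)}{\tilde{B}(\lambda(1-r)) - r} \exp\left(\int_r^1 \frac{-\lambda(1-x)}{\nu(\tilde{B}(\lambda(1-x)) - x)} dx\right) = \left(\frac{1-\rho}{1-\rho r}\right)^{1+\lambda/\nu} e^{(r-1)\lambda/\nu}$. -/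
open Real

theorem stmt_11 (lam μ ν ρ : ℝ) (hμ : 0 < μ) (hlam : 0 < lam) (hlt : lam < μ)
    (hρ : ρ = lam / μ) (hν : 0 < ν)
    (B : ℝ → ℝ) (hB : ∀ s, B s = μ / (μ + s)) :
    ∀ r ∈ Set.Ico (0:ℝ) 1,
      (1 - ρ) * B (lam * (1 - r)) * (1 - r) / (B (lam * (1 - r)) - r) *
        Real.exp (∫ x in r..1, -lam * (1 - x) / (ν * (B (lam * (1 - x)) - x))) =
      ((1 - ρ) / (1 - ρ * r)) ^ (1 + lam / ν) * Real.exp ((r - 1) * lam / ν) := by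
  intro r hr
  obtain ⟨hr0, hr1⟩ := hr
  have hml : 0 < μ - lam := by linarith
  have hd : 0 < μ - lam * r := by nlinarith
  have hden : 0 < μ + lam * (1 - r) := by nlinarith
  -- the integral in closed form
  have hInt : (∫ x in r..1, -lam * (1 - x) / (ν * (B (lam * (1 - x)) - x)))
      = (-(lam/ν) * 1 + lam/ν * Real.log (μ - lam * 1))
        - (-(lam/ν) * r + lam/ν * Real.log (μ - lam * r)) := by
    have h1 : (∫ x in r..1, -lam * (1 - x) / (ν * (B (lam * (1 - x)) - x)))
        = ∫ x in r..1, (-(lam/ν) + (lam/ν) * (-lam / (μ - lam * x))) := by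
      apply intervalIntegral.integral_congr_ae
      have h0 : (MeasureTheory.volume : MeasureTheory.Measure ℝ) {(1:ℝ)} = 0 :=
        MeasureTheory.measure_singleton 1
      filter_upwards [MeasureTheory.measure_eq_zero_iff_ae_notMem.mp h0] with x hx1 hx
      rw [Set.uIoc_of_le hr1.le] at hx
      have hx1' : x < 1 := lt_of_le_of_ne hx.2 (by simpa using hx1)
      have hxr : r < x := hx.1
      have hμx : 0 < μ - lam * x := by nlinarith
      have hdx : 0 < μ + lam * (1 - x) := by nlinarith
      rw [hB]
      have hkey : μ / (μ + lam * (1 - x)) - x = (1 - x) * (μ - lam * x) / (μ + lam * (1 - x)) := by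
        field_simp; ring
      rw [hkey]
      have h1x : (0:ℝ) < 1 - x := by linarith
      field_simp
      ring
    rw [h1]
    have hFTC := intervalIntegral.integral_eq_sub_of_hasDerivAt (a := r) (b := 1)
      (f := fun x => -(lam/ν) * x + lam/ν * Real.log (μ - lam * x))
      (f' := fun x => -(lam/ν) + (lam/ν) * (-lam / (μ - lam * x)))
      ?_ ?_
    · simpa using hFTC
    · intro x hx
      rw [Set.uIcc_of_le hr1.le] at hx
      have hμx : 0 < μ - lam * x := by nlinarith [hx.1, hx.2]
      have hlin : HasDerivAt (fun x : ℝ => μ - lam * x) (-lam) x := by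
        simpa using ((hasDerivAt_id x).const_mul lam).const_sub μ
      have hlog : HasDerivAt (fun x : ℝ => Real.log (μ - lam * x)) (-lam / (μ - lam * x)) x :=
        hlin.log hμx.ne'
      have := (((hasDerivAt_id x).const_mul (-(lam/ν))).add (hlog.const_mul (lam/ν)))
      simpa [mul_comm, mul_div_assoc, Pi.add_def] using this
    · apply ContinuousOn.intervalIntegrable
      apply ContinuousOn.add continuousOn_const
      apply ContinuousOn.mul continuousOn_const
      apply ContinuousOn.div continuousOn_const
      · exact (continuous_const.sub (continuous_const.mul continuous_id)).continuousOn
      · intro x hx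
        rw [Set.uIcc_of_le hr1.le] at hx
        have : 0 < μ - lam * x := by nlinarith [hx.1, hx.2]
        exact this.ne'
  set q : ℝ := (μ - lam) / (μ - lam * r) with hq
  have hqpos : 0 < q := div_pos hml hd
  have hexp : Real.exp (∫ x in r..1, -lam * (1 - x) / (ν * (B (lam * (1 - x)) - x)))
      = q ^ (lam/ν) * Real.exp ((r - 1) * lam / ν) := by
    rw [hInt]
    have hval : (-(lam/ν) * 1 + lam/ν * Real.log (μ - lam * 1))
        - (-(lam/ν) * r + lam/ν * Real.log (μ - lam * r))
        = Real.log q * (lam/ν) + (r - 1) * lam / ν := by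
      rw [hq, Real.log_div hml.ne' hd.ne']
      have : μ - lam * 1 = μ - lam := by ring
      rw [this]
      ring
    rw [hval, Real.exp_add, Real.rpow_def_of_pos hqpos]
  rw [hexp]
  have hc : (1 - ρ) / (1 - ρ * r) = q := by
    rw [hρ, hq]
    have h1 : 1 - lam / μ * r ≠ 0 := by
      have : 1 - lam / μ * r = (μ - lam * r) / μ := by field_simp
      rw [this]; positivity
    field_simp
  have hpre : (1 - ρ) * B (lam * (1 - r)) * (1 - r) / (B (lam * (1 - r)) - r) = q := by
    rw [hB, hρ, hq]
    have hkey : μ / (μ + lam * (1 - r)) - r = (1 - r) * (μ - lam * r) / (μ + lam * (1 - r)) := by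
      field_simp; ring
    rw [hkey]
    have h1r : (0:ℝ) < 1 - r := by linarith
    field_simp
  rw [hpre, hc, Real.rpow_add hqpos, Real.rpow_one]
  ring
end

section
/- Let $\lambda, \mu > 0$ with $\rho = \lambda/\mu < 1$, and let $k \ge 1$ be an integer. Define $\pi(i,0) = \binom{i+k-1}{i}(1-\rho)^{k+1}\rho^i$ for $i \ge 0$ and $\pi(i,1) = \binom{i+k-1}{i-1}(1-\rho)^{k+1}\rho^i$ for $i \ge 1$ (with $\pi(0,1)=0$). Then these numbers satisfy the balance equations $\lambda \pi(0,0) = \mu \pi(1,1)$; $(\lambda + \mu)\pi(1,1) = f(1)\pi(1,0) + \mu(1-\psi(1))\pi(2,1)$; $(\lambda + f(i))\pi(i,0) = \lambda \pi(i-1,0) + \mu \psi(i) \pi(i+1,1)$ for $i \ge 1$; and $(\lambda+\mu)\pi(i,1) = \lambda \pi(i-1,1) + f(i)\pi(i,0) + \mu(1-\psi(i))\pi(i+1,1)$ for $i \ge 2$, where $\psi(i) = k/(k+i)$ and $f(i) = \mu i/(i+k-1)$; moreover $\sum_{i,j}\pi(i,j) = 1$ and $\pi(i,0)+\pi(i,1)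 = \binom{i+k}{i}(1-\rho)^{k+1}\rho^i$ for $i \ge 1$. -/
lemma aux_choose_succ (n r : ℕ) :
    ((n:ℝ) + 1) * (Nat.choose n r : ℝ) = (Nat.choose (n+1) (r+1) : ℝ) * ((r:ℝ) + 1) := by
  exact_mod_cast Nat.add_one_mul_choose_eq n r

theorem stmt_12 (lam μ ρ : ℝ) (hlam : 0 < lam) (hμ : 0 < μ) (hρ : ρ = lam / μ)
    (hρ1 : ρ < 1) (k : ℕ) (hk : 1 ≤ k)
    (π₀ π₁ : ℕ → ℝ)
    (hπ₀ : ∀ i, π₀ i = (Nat.choose (i + k - 1) i : ℝ) * (1 - ρ) ^ (k + 1) * ρ ^ i)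
    (hπ₁0 : π₁ 0 = 0)
    (hπ₁ : ∀ i ≥ 1, π₁ i = (Nat.choose (i + k - 1) (i - 1) : ℝ) * (1 - ρ) ^ (k + 1) * ρ ^ i)
    (ψ f : ℕ → ℝ)
    (hψ : ∀ i, ψ i = (k : ℝ) / ((k : ℝ) + i))
    (hf : ∀ i, f i = μ * i / ((i : ℝ) + k - 1)) :
    lam * π₀ 0 = μ * π₁ 1 ∧
    (lam + μ) * π₁ 1 = f 1 * π₀ 1 + μ * (1 - ψ 1) * π₁ 2 ∧
    (∀ i ≥ 1, (lam + f i) * π₀ i = lam * π₀ (i - 1) + μ * ψ i * π₁ (i + 1)) ∧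
    (∀ i ≥ 2, (lam + μ) * π₁ i =
      lam * π₁ (i - 1) + f i * π₀ i + μ * (1 - ψ i) * π₁ (i + 1)) ∧
    (∑' i : ℕ, (π₀ i + π₁ i)) = 1 ∧
    (∀ i ≥ 1, π₀ i + π₁ i = (Nat.choose (i + k) i : ℝ) * (1 - ρ) ^ (k + 1) * ρ ^ i) := by
  obtain ⟨m, rfl⟩ : ∃ m, k = m + 1 := ⟨k - 1, by omega⟩
  have hl : lam = ρ * μ := by rw [hρ]; field_simp
  have hρ0 : 0 < ρ := by rw [hρ]; positivity
  -- part 6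
  have h6 : ∀ i ≥ 1, π₀ i + π₁ i =
      (Nat.choose (i + (m+1)) i : ℝ) * (1 - ρ) ^ ((m+1) + 1) * ρ ^ i := by
    intro i hi
    obtain ⟨j, rfl⟩ : ∃ j, i = j + 1 := ⟨i - 1, by omega⟩
    rw [hπ₀, hπ₁ _ (by omega)]
    simp only [show (j+1)+(m+1)-1 = j+m+1 from by omega, show j+1-1 = j from rfl,
      show (j+1)+(m+1) = j+m+2 from by omega]
    have pas : (Nat.choose (j+m+2) (j+1) : ℝ)
        = (Nat.choose (j+m+1) j : ℝ) + (Nat.choose (j+m+1) (j+1) : ℝ) := by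
      exact_mod_cast Nat.choose_succ_succ (j+m+1) j
    push_cast
    linear_combination (-(ρ^(j+1) * (1-ρ)^(m+1+1))) * pas
  refine ⟨?_, ?_, ?_, ?_, ?_, h6⟩
  · rw [hπ₀ 0, hπ₁ 1 le_rfl, hl]
    norm_num
    ring
  · rw [hπ₁ 1 le_rfl, hπ₁ 2 (by omega), hπ₀ 1, hf, hψ, hl]
    simp only [show 1+(m+1)-1 = m+1 from by omega, show 2+(m+1)-1 = m+2 from by omega,
      show (1:ℕ)-1 = 0 from rfl, show (2:ℕ)-1 = 1 from rfl,
      Nat.choose_zero_right, Nat.choose_one_right]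
    have h1 : ((m:ℝ) + 1) ≠ 0 := by positivity
    have h2 : ((m:ℝ) + 2) ≠ 0 := by positivity
    push_cast
    field_simp
    ring
  · intro i hi
    obtain ⟨j, rfl⟩ : ∃ j, i = j + 1 := ⟨i - 1, by omega⟩
    simp only [Nat.add_sub_cancel]
    rw [hπ₀ (j+1), hπ₀ j, hπ₁ (j+1+1) (by omega), hf, hψ, hl]
    simp only [show (j+1)+(m+1)-1 = j+m+1 from by omega, show j+(m+1)-1 = j+m from by omega,
      show (j+1+1)+(m+1)-1 = j+m+2 from by omega, show j+1+1-1 = j+1 from rfl]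
    have hd1 : ((j:ℝ) + m + 1) ≠ 0 := by positivity
    have hd2 : ((m:ℝ) + 1 + ((j:ℝ) + 1)) ≠ 0 := by positivity
    have id1 : ((j:ℝ)+1) * (Nat.choose (j+m+1) (j+1) : ℝ)
        = ((j:ℝ)+(m:ℝ)+1) * (Nat.choose (j+m) j : ℝ) := by
      have := aux_choose_succ (j+m) j
      push_cast at this
      linear_combination -this
    have id2 : ((m:ℝ)+1) * (Nat.choose (j+m+2) (j+1) : ℝ)
        = ((j:ℝ)+(m:ℝ)+2) * (Nat.choose (j+m+1) (j+1) : ℝ) := by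
      have s1 : Nat.choose (j+m+1) (j+1) = Nat.choose (j+m+1) m := by
        rw [show j+1 = j+m+1-m from by omega]; exact Nat.choose_symm (by omega)
      have s2 : Nat.choose (j+m+2) (j+1) = Nat.choose (j+m+2) (m+1) := by
        rw [show j+1 = j+m+2-(m+1) from by omega]; exact Nat.choose_symm (by omega)
      rw [s1, s2]
      have := aux_choose_succ (j+m+1) m
      push_cast at this
      linear_combination -this
    have d1 : ((j:ℝ)+1) / ((j:ℝ)+(m:ℝ)+1) * (Nat.choose (j+m+1) (j+1) : ℝ)
        = (Nat.choose (j+m) j : ℝ) := by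
      rw [div_mul_eq_mul_div, div_eq_iff hd1]
      linear_combination id1
    have d2 : ((m:ℝ)+1) / ((m:ℝ)+1+((j:ℝ)+1)) * (Nat.choose (j+m+2) (j+1) : ℝ)
        = (Nat.choose (j+m+1) (j+1) : ℝ) := by
      rw [div_mul_eq_mul_div, div_eq_iff hd2]
      linear_combination id2
    push_cast
    linear_combination (μ * (1-ρ)^(m+1+1) * ρ^(j+1)) * d1
      - (μ * (1-ρ)^(m+1+1) * ρ^(j+1) * ρ) * d2
  · intro i hi
    obtain ⟨j, rfl⟩ : ∃ j, i = j + 2 := ⟨i - 2, by omega⟩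
    rw [show j+2-1 = j+1 from rfl]
    rw [hπ₁ (j+2) (by omega), hπ₁ (j+1) (by omega), hπ₁ (j+2+1) (by omega),
      hπ₀ (j+2), hf, hψ, hl]
    simp only [show (j+2)+(m+1)-1 = j+m+2 from by omega, show j+2-1 = j+1 from rfl,
      show (j+1)+(m+1)-1 = j+m+1 from by omega, show j+1-1 = j from rfl,
      show (j+2+1)+(m+1)-1 = j+m+3 from by omega, show j+2+1-1 = j+2 from rfl]
    have hd1 : ((j:ℝ)+(m:ℝ)+2) ≠ 0 := by positivity
    have hd2 : ((m:ℝ)+1+((j:ℝ)+2)) ≠ 0 := by positivity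
    have g1 : ((j:ℝ)+2) / ((j:ℝ)+(m:ℝ)+2) * (Nat.choose (j+m+2) (j+2) : ℝ)
        = (Nat.choose (j+m+1) (j+1) : ℝ) := by
      rw [div_mul_eq_mul_div, div_eq_iff hd1]
      have := aux_choose_succ (j+m+1) (j+1)
      push_cast at this
      linear_combination -this
    have q1 : ((m:ℝ)+1) / ((m:ℝ)+1+((j:ℝ)+2)) * (Nat.choose (j+m+3) (j+2) : ℝ)
        = (Nat.choose (j+m+2) (j+2) : ℝ) := by
      rw [div_mul_eq_mul_div, div_eq_iff hd2]
      have s1 : Nat.choose (j+m+2) (j+2) = Nat.choose (j+m+2) m := by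
        rw [show j+2 = j+m+2-m from by omega]; exact Nat.choose_symm (by omega)
      have s2 : Nat.choose (j+m+3) (j+2) = Nat.choose (j+m+3) (m+1) := by
        rw [show j+2 = j+m+3-(m+1) from by omega]; exact Nat.choose_symm (by omega)
      rw [s1, s2]
      have := aux_choose_succ (j+m+2) m
      push_cast at this
      linear_combination -this
    have pas3 : (Nat.choose (j+m+3) (j+2) : ℝ)
        = (Nat.choose (j+m+2) (j+1) : ℝ) + (Nat.choose (j+m+2) (j+2) : ℝ) := by
      exact_mod_cast Nat.choose_succ_succ (j+m+2) (j+1)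
    have p : (Nat.choose (j+m+2) (j+1) : ℝ)
        = (Nat.choose (j+m+1) j : ℝ) + (Nat.choose (j+m+1) (j+1) : ℝ) := by
      exact_mod_cast Nat.choose_succ_succ (j+m+1) j
    push_cast
    linear_combination (-(μ * (1-ρ)^(m+1+1) * ρ^(j+2))) * g1
      + (μ * (1-ρ)^(m+1+1) * ρ^(j+2)) * p
      + (μ * (1-ρ)^(m+1+1) * ρ^(j+2) * ρ) * q1
      - (μ * (1-ρ)^(m+1+1) * ρ^(j+2) * ρ) * pas3
  · have hr : ‖ρ‖ < 1 := by rw [Real.norm_eq_abs, abs_of_pos hρ0]; exact hρ1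
    have hpt : ∀ i, π₀ i + π₁ i
        = (Nat.choose (i + (m+1)) (m+1) : ℝ) * ρ ^ i * (1 - ρ) ^ ((m+1)+1) := by
      intro i
      rcases Nat.eq_zero_or_pos i with h0 | h1
      · subst h0
        rw [hπ₀ 0, hπ₁0]
        simp [show 0+(m+1)-1 = m from by omega]
      · rw [h6 i h1]
        have hs : Nat.choose (i + (m+1)) i = Nat.choose (i + (m+1)) (m+1) := by
          simpa using Nat.choose_symm (show m+1 ≤ i+(m+1) by omega)
        rw [hs]; ring
    rw [tsum_congr hpt, tsum_mul_right,
      tsum_choose_mul_geometric_of_norm_lt_one (m+1) hr]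
    have h1ρ : (1:ℝ) - ρ ≠ 0 := by
      have : ρ < 1 := hρ1
      intro h; nlinarith
    field_simp
end
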